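/- Dissipative property: Let u : [t₀,T) → H be a C² solution of m·ü(t) + γ·u̇(t) - s(u(t)) = 0 with m, γ > 0, and fix i with L_i := Lip(∇f_i; u([t₀,T))) < +∞. Define E_i(t) = f_i(u(t)) + (m/γ)(d/dt)f_i(u(t)) + m‖u̇(t)‖². Then for almost every t, E_i'(t) ≤ -(m²/γ)‖ü(t)‖² - (1/γ)(γ² - m·L_i)‖u̇(t)‖². -/

import Mathlib

open scoped RealInnerProductSpace
open MeasureTheory

/-- Dissipative property of (IMOG): along a solution of
`m ü + γ u̇ - s(u) = 0`, the energy
`E_i(t) = f_i(u t) + (m/γ) (f_i∘u)'(t) + m ‖u̇(t)‖²` satisfies, for a.e. `t`,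
`E_i'(t) ≤ -(m²/γ)‖ü(t)‖² - (1/γ)(γ² - m L_i)‖u̇(t)‖²`. -/
theorem imog_dissipative
    {H : Type*} [NormedAddCommGroup H] [InnerProductSpace ℝ H] [CompleteSpace H]
    {q : ℕ} (f : Fin q → H → ℝ) (hf : ∀ i, ContDiff ℝ 1 (f i))
    (m γ : ℝ) (hm : 0 < m) (hγ : 0 < γ)
    (t₀ T : ℝ) (hT : t₀ < T)
    (u u' u'' : ℝ → H)
    (hucont : ContinuousOn u (Set.Ico t₀ T))
    (hu : ∀ t ∈ Set.Ioo t₀ T, HasDerivAt u (u' t) t)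
    (hu' : ∀ t ∈ Set.Ioo t₀ T, HasDerivAt u' (u'' t) t)
    (hode : ∀ t ∈ Set.Ioo t₀ T,
      -(m • u'' t + γ • u' t) ∈ convexHull ℝ (Set.range fun i => gradient (f i) (u t)) ∧
      ∀ y ∈ convexHull ℝ (Set.range fun i => gradient (f i) (u t)),
        ‖m • u'' t + γ • u' t‖ ≤ ‖y‖)
    (i : Fin q) (Li : NNReal)
    (hLi : LipschitzOnWith Li (gradient (f i)) (u '' Set.Ico t₀ T))
    (E : ℝ → ℝ)
    (hE : ∀ t, E t = f i (u t) + (m / γ) * ⟪gradient (f i) (u t), u' t⟫ + m * ‖u' t‖ ^ 2) :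
    ∀ᵐ t ∂(volume : Measure ℝ), t ∈ Set.Ioo t₀ T →
      DifferentiableAt ℝ E t ∧
      deriv E t ≤ -(m ^ 2 / γ) * ‖u'' t‖ ^ 2 - (1 / γ) * (γ ^ 2 - m * (Li : ℝ)) * ‖u' t‖ ^ 2 := by
  classical
  have hγ0 : γ ≠ 0 := hγ.ne'
  -- the gradient of `f i` belongs to the convex hull
  have hgmem : ∀ t ∈ Set.Ioo t₀ T,
      gradient (f i) (u t) ∈ convexHull ℝ (Set.range fun j => gradient (f j) (u t)) :=
    fun t _ => subset_convexHull ℝ _ ⟨i, rfl⟩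
  -- key variational inequality
  have hkey : ∀ t ∈ Set.Ioo t₀ T,
      ⟪gradient (f i) (u t), m • u'' t + γ • u' t⟫ ≤ -‖m • u'' t + γ • u' t‖ ^ 2 := by
    intro t ht
    obtain ⟨hmem, hmin⟩ := hode t ht
    set K := convexHull ℝ (Set.range fun j => gradient (f j) (u t)) with hK
    have hKc : Convex ℝ K := convex_convexHull ℝ _
    haveI : Nonempty K := ⟨⟨_, hmem⟩⟩
    have heq : ‖(0 : H) - (-(m • u'' t + γ • u' t))‖ = ⨅ w : K, ‖(0 : H) - w‖ := by
      apply le_antisymm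
      · apply le_ciInf
        intro w
        simp only [zero_sub, norm_neg, neg_neg]
        exact hmin w w.2
      · exact ciInf_le ⟨0, by rintro x ⟨w, rfl⟩; positivity⟩ (⟨_, hmem⟩ : K)
    have hproj := (norm_eq_iInf_iff_real_inner_le_zero hKc hmem).mp heq
      (gradient (f i) (u t)) (hgmem t ht)
    have h1 : ⟪m • u'' t + γ • u' t,
        gradient (f i) (u t) + (m • u'' t + γ • u' t)⟫ ≤ 0 := by
      rwa [zero_sub, neg_neg, sub_neg_eq_add] at hproj
    rw [inner_add_right, real_inner_self_eq_norm_sq] at h1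
    rw [real_inner_comm] at h1
    linarith
  -- continuity of the gradient map
  have hgradcont : Continuous (gradient (f i)) := by
    have : gradient (f i) = fun x => (InnerProductSpace.toDual ℝ H).symm (fderiv ℝ (f i) x) :=
      rfl
    rw [this]
    exact (LinearIsometryEquiv.continuous _).comp ((hf i).continuous_fderiv one_ne_zero)
  -- chain rule for `f i ∘ u`
  have hchain : ∀ t ∈ Set.Ioo t₀ T,
      HasDerivAt (fun s => f i (u s)) ⟪gradient (f i) (u t), u' t⟫ t := by
    intro t ht
    have h1 : HasFDerivAt (f i) (fderiv ℝ (f i) (u t)) (u t) :=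
      (((hf i).differentiable one_ne_zero) (u t)).hasFDerivAt
    have h2 := h1.comp_hasDerivAt t (hu t ht)
    convert h2 using 1
    case e'_4 => rfl
    case e'_5 => rfl
    case e'_8 => rfl
    rw [show gradient (f i) (u t)
        = (InnerProductSpace.toDual ℝ H).symm (fderiv ℝ (f i) (u t)) from rfl,
      InnerProductSpace.toDual_symm_apply]
  -- the main statement on any compact subinterval
  have main : ∀ a b : ℝ, t₀ < a → b < T →
      ∀ᵐ t ∂(volume : Measure ℝ), t ∈ Set.Ioo a b →
        DifferentiableAt ℝ E t ∧
        deriv E t ≤ -(m ^ 2 / γ) * ‖u'' t‖ ^ 2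
          - (1 / γ) * (γ ^ 2 - m * (Li : ℝ)) * ‖u' t‖ ^ 2 := by
    intro a b ha hb
    rcases le_or_gt b a with hba | hab
    · exact Filter.Eventually.of_forall fun t ht =>
        absurd (ht.1.trans ht.2) (not_lt.mpr hba)
    have hsub : Set.Icc a b ⊆ Set.Ioo t₀ T := fun x hx =>
      ⟨lt_of_lt_of_le ha hx.1, lt_of_le_of_lt hx.2 hb⟩
    -- continuity on the compact interval
    have hu'cont : ContinuousOn u' (Set.Icc a b) := fun x hx =>
      ((hu' x (hsub hx)).differentiableAt.continuousAt).continuousWithinAt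
    have hucont' : ContinuousOn u (Set.Icc a b) := fun x hx =>
      ((hu x (hsub hx)).differentiableAt.continuousAt).continuousWithinAt
    have hgcont : ContinuousOn (fun s => gradient (f i) (u s)) (Set.Icc a b) :=
      hgradcont.comp_continuousOn hucont'
    -- bounds on the compact interval
    obtain ⟨M₁, hM₁⟩ := isCompact_Icc.exists_bound_of_continuousOn hu'cont
    obtain ⟨Mg, hMg⟩ := isCompact_Icc.exists_bound_of_continuousOn hgcont
    have habmem : a ∈ Set.Icc a b := ⟨le_rfl, hab.le⟩
    have hM₁0 : 0 ≤ M₁ := (norm_nonneg _).trans (hM₁ a habmem)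
    have hMg0 : 0 ≤ Mg := (norm_nonneg _).trans (hMg a habmem)
    set M₂ : ℝ := (Mg + γ * M₁) / m with hM₂def
    have hM₂ : ∀ x ∈ Set.Icc a b, ‖u'' x‖ ≤ M₂ := by
      intro x hx
      have hx' := hsub hx
      have h1 : ‖m • u'' x + γ • u' x‖ ≤ ‖gradient (f i) (u x)‖ :=
        (hode x hx').2 _ (hgmem x hx')
      have h2 : m * ‖u'' x‖ = ‖m • u'' x‖ := by
        rw [norm_smul, Real.norm_of_nonneg hm.le]
      have h3 : ‖γ • u' x‖ = γ * ‖u' x‖ := by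
        rw [norm_smul, Real.norm_of_nonneg hγ.le]
      have h4 : ‖m • u'' x‖ ≤ ‖m • u'' x + γ • u' x‖ + ‖γ • u' x‖ := by
        have := norm_sub_le (m • u'' x + γ • u' x) (γ • u' x)
        simpa using this
      have h5 : m * ‖u'' x‖ ≤ Mg + γ * M₁ := by
        have := hMg x hx
        have h6 := hM₁ x hx
        nlinarith
      rw [hM₂def, le_div_iff₀ hm]
      linarith
    have hM₂0 : 0 ≤ M₂ := (norm_nonneg _).trans (hM₂ a habmem)
    -- Lipschitz estimates
    have hulip : LipschitzOnWith M₁.toNNReal u (Set.Icc a b) := by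
      apply (convex_Icc a b).lipschitzOnWith_of_nnnorm_hasDerivWithin_le
        (f' := u') (fun x hx => (hu x (hsub hx)).hasDerivWithinAt)
      intro x hx
      rw [← norm_toNNReal]
      exact Real.toNNReal_mono (hM₁ x hx)
    have hu'lip : LipschitzOnWith M₂.toNNReal u' (Set.Icc a b) := by
      apply (convex_Icc a b).lipschitzOnWith_of_nnnorm_hasDerivWithin_le
        (f' := u'') (fun x hx => (hu' x (hsub hx)).hasDerivWithinAt)
      intro x hx
      rw [← norm_toNNReal]
      exact Real.toNNReal_mono (hM₂ x hx)
    have hmaps : Set.MapsTo u (Set.Icc a b) (u '' Set.Ico t₀ T) := fun x hx =>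
      Set.mem_image_of_mem u (Set.Ioo_subset_Ico_self (hsub hx))
    have hglip : LipschitzOnWith (Li * M₁.toNNReal)
        ((gradient (f i)) ∘ u) (Set.Icc a b) := hLi.comp hulip hmaps
    -- the function ψ
    set ψ : ℝ → ℝ := fun s => ⟪gradient (f i) (u s), u' s⟫ with hψdef
    set Kψ : ℝ := (Li : ℝ) * M₁ * M₁ + Mg * M₂ with hKψdef
    have hKψ0 : 0 ≤ Kψ := by positivity
    have hψlip : LipschitzOnWith Kψ.toNNReal ψ (Set.Icc a b) := by
      rw [lipschitzOnWith_iff_dist_le_mul]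
      intro x hx y hy
      have hgd : dist (gradient (f i) (u x)) (gradient (f i) (u y))
          ≤ (Li : ℝ) * M₁ * dist x y := by
        have := hglip.dist_le_mul x hx y hy
        calc dist (gradient (f i) (u x)) (gradient (f i) (u y))
            ≤ ((Li * M₁.toNNReal : NNReal) : ℝ) * dist x y := this
          _ ≤ (Li : ℝ) * M₁ * dist x y := by
              apply mul_le_mul_of_nonneg_right _ dist_nonneg
              push_cast
              rw [Real.coe_toNNReal M₁ hM₁0]
      have hvd : dist (u' x) (u' y) ≤ M₂ * dist x y := by
        have := hu'lip.dist_le_mul x hx y hy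
        calc dist (u' x) (u' y) ≤ (M₂.toNNReal : ℝ) * dist x y := this
          _ ≤ M₂ * dist x y := by
              apply mul_le_mul_of_nonneg_right _ dist_nonneg
              rw [Real.coe_toNNReal M₂ hM₂0]
      have hsplit : ψ x - ψ y =
          ⟪gradient (f i) (u x) - gradient (f i) (u y), u' x⟫
          + ⟪gradient (f i) (u y), u' x - u' y⟫ := by
        rw [hψdef]
        simp only [inner_sub_left, inner_sub_right]
        ring
      rw [Real.dist_eq, hsplit]
      calc |⟪gradient (f i) (u x) - gradient (f i) (u y), u' x⟫
            + ⟪gradient (f i) (u y), u' x - u' y⟫|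
          ≤ |⟪gradient (f i) (u x) - gradient (f i) (u y), u' x⟫|
            + |⟪gradient (f i) (u y), u' x - u' y⟫| := abs_add_le _ _
        _ ≤ ‖gradient (f i) (u x) - gradient (f i) (u y)‖ * ‖u' x‖
            + ‖gradient (f i) (u y)‖ * ‖u' x - u' y‖ :=
            add_le_add (abs_real_inner_le_norm _ _) (abs_real_inner_le_norm _ _)
        _ ≤ ((Li : ℝ) * M₁ * dist x y) * M₁ + Mg * (M₂ * dist x y) := by
            rw [← dist_eq_norm, ← dist_eq_norm]
            apply add_le_add
            · exact mul_le_mul hgd (hM₁ x hx) (norm_nonneg _) (by positivity)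
            · exact mul_le_mul (hMg y hy) hvd dist_nonneg hMg0
        _ = (Kψ.toNNReal : ℝ) * dist x y := by
            rw [Real.coe_toNNReal Kψ hKψ0, hKψdef]; ring
    -- Rademacher a.e. differentiability of ψ on the interval
    have hae := hψlip.ae_differentiableWithinAt_of_mem (μ := volume)
    filter_upwards [hae] with t hdiff ht
    have hts : t ∈ Set.Icc a b := Set.Ioo_subset_Icc_self ht
    have htI : t ∈ Set.Ioo t₀ T := hsub hts
    have hψdiff : DifferentiableAt ℝ ψ t :=
      (hdiff hts).differentiableAt (Icc_mem_nhds ht.1 ht.2)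
    have hψd : HasDerivAt ψ (deriv ψ t) t := hψdiff.hasDerivAt
    set dψ : ℝ := deriv ψ t with hdψdef
    -- derivative of s ↦ ⟪g t, u' s⟫
    have hc : HasDerivAt (fun s => ⟪gradient (f i) (u t), u' s⟫)
        ⟪gradient (f i) (u t), u'' t⟫ t := by
      have := HasDerivAt.inner ℝ (hasDerivAt_const t (gradient (f i) (u t))) (hu' t htI)
      simpa using this
    -- bound on dψ
    have hdψle : dψ ≤ ⟪gradient (f i) (u t), u'' t⟫ + (Li : ℝ) * ‖u' t‖ ^ 2 := by
      have hr : HasDerivAt (fun s => ψ s - ⟪gradient (f i) (u t), u' s⟫)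
          (dψ - ⟪gradient (f i) (u t), u'' t⟫) t := hψd.sub hc
      have hslope := hasDerivAt_iff_tendsto_slope.mp hr
      have huslope := hasDerivAt_iff_tendsto_slope.mp (hu t htI)
      have hBt : Filter.Tendsto (fun s => (Li : ℝ) * ‖slope u t s‖ * ‖u' s‖)
          (nhdsWithin t {t}ᶜ) (nhds ((Li : ℝ) * ‖u' t‖ * ‖u' t‖)) := by
        apply Filter.Tendsto.mul
        · exact Filter.Tendsto.const_mul _ huslope.norm
        · exact (((hu' t htI).differentiableAt.continuousAt).norm).tendsto.mono_left
            nhdsWithin_le_nhds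
      have hev : ∀ᶠ s in nhdsWithin t {t}ᶜ,
          slope (fun s => ψ s - ⟪gradient (f i) (u t), u' s⟫) t s
            ≤ (Li : ℝ) * ‖slope u t s‖ * ‖u' s‖ := by
        filter_upwards [nhdsWithin_le_nhds (Ioo_mem_nhds htI.1 htI.2),
          self_mem_nhdsWithin] with s hsI hst
        have hst' : s ≠ t := hst
        have h0 : slope (fun s => ψ s - ⟪gradient (f i) (u t), u' s⟫) t s
            = (s - t)⁻¹ * ⟪gradient (f i) (u s) - gradient (f i) (u t), u' s⟫ := by
          rw [slope_def_field]
          have : ψ t - ⟪gradient (f i) (u t), u' t⟫ = 0 := by rw [hψdef]; ring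
          rw [hψdef]
          simp only [inner_sub_left]
          field_simp
          ring
        have husl : ‖slope u t s‖ = |s - t|⁻¹ * ‖u s - u t‖ := by
          rw [slope_def_module, norm_smul, norm_inv, Real.norm_eq_abs]
        have hgb : ‖gradient (f i) (u s) - gradient (f i) (u t)‖
            ≤ (Li : ℝ) * ‖u s - u t‖ := by
          have hmem1 : u s ∈ u '' Set.Ico t₀ T :=
            Set.mem_image_of_mem u (Set.Ioo_subset_Ico_self hsI)
          have hmem2 : u t ∈ u '' Set.Ico t₀ T :=
            Set.mem_image_of_mem u (Set.Ioo_subset_Ico_self htI)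
          have := hLi.dist_le_mul (u s) hmem1 (u t) hmem2
          rwa [dist_eq_norm, dist_eq_norm] at this
        calc slope (fun s => ψ s - ⟪gradient (f i) (u t), u' s⟫) t s
            ≤ |slope (fun s => ψ s - ⟪gradient (f i) (u t), u' s⟫) t s| := le_abs_self _
          _ = |s - t|⁻¹ * |⟪gradient (f i) (u s) - gradient (f i) (u t), u' s⟫| := by
              rw [h0, abs_mul, abs_inv]
          _ ≤ |s - t|⁻¹ * (‖gradient (f i) (u s) - gradient (f i) (u t)‖ * ‖u' s‖) := by
              apply mul_le_mul_of_nonneg_left (abs_real_inner_le_norm _ _)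
              positivity
          _ ≤ |s - t|⁻¹ * (((Li : ℝ) * ‖u s - u t‖) * ‖u' s‖) := by
              apply mul_le_mul_of_nonneg_left _ (by positivity)
              exact mul_le_mul_of_nonneg_right hgb (norm_nonneg _)
          _ = (Li : ℝ) * ‖slope u t s‖ * ‖u' s‖ := by rw [husl]; ring
      have hlim := le_of_tendsto_of_tendsto hslope hBt hev
      have : ‖u' t‖ * ‖u' t‖ = ‖u' t‖ ^ 2 := (sq ‖u' t‖).symm
      linarith [hlim]
    -- derivative of E
    have hEfun : E = fun s => f i (u s) + (m / γ) * ψ s + m * ⟪u' s, u' s⟫ := by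
      funext s
      rw [hE s, hψdef, real_inner_self_eq_norm_sq]
    have hEd : HasDerivAt E
        ((⟪gradient (f i) (u t), u' t⟫ + (m / γ) * dψ)
          + m * (⟪u' t, u'' t⟫ + ⟪u'' t, u' t⟫)) t := by
      rw [hEfun]
      exact ((hchain t htI).add (hψd.const_mul (m / γ))).add
        ((HasDerivAt.inner ℝ (hu' t htI) (hu' t htI)).const_mul m)
    refine ⟨hEd.differentiableAt, ?_⟩
    rw [hEd.deriv]
    -- final algebra
    have hk := hkey t htI
    have hexp1 : ⟪gradient (f i) (u t), m • u'' t + γ • u' t⟫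
        = m * ⟪gradient (f i) (u t), u'' t⟫ + γ * ⟪gradient (f i) (u t), u' t⟫ := by
      rw [inner_add_right, real_inner_smul_right, real_inner_smul_right]
    have hexp2 : ‖m • u'' t + γ • u' t‖ ^ 2
        = m ^ 2 * ‖u'' t‖ ^ 2 + 2 * m * γ * ⟪u' t, u'' t⟫ + γ ^ 2 * ‖u' t‖ ^ 2 := by
      rw [norm_add_sq_real, norm_smul, norm_smul, real_inner_smul_left,
        real_inner_smul_right, real_inner_comm (u'' t) (u' t)]
      simp [Real.norm_of_nonneg hm.le, Real.norm_of_nonneg hγ.le]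
      ring
    rw [hexp1, hexp2] at hk
    have hcomm : ⟪u'' t, u' t⟫ = ⟪u' t, u'' t⟫ := real_inner_comm _ _
    rw [hcomm]
    have hmul : m * dψ ≤ m * (⟪gradient (f i) (u t), u'' t⟫ + (Li : ℝ) * ‖u' t‖ ^ 2) :=
      mul_le_mul_of_nonneg_left hdψle hm.le
    have hgauge : ∀ x y : ℝ, γ * x ≤ γ * y → x ≤ y := fun x y h =>
      le_of_mul_le_mul_left h hγ
    apply hgauge
    have e1 : γ * ((⟪gradient (f i) (u t), u' t⟫ + (m / γ) * dψ)
        + m * (⟪u' t, u'' t⟫ + ⟪u' t, u'' t⟫))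
        = γ * ⟪gradient (f i) (u t), u' t⟫ + m * dψ
          + 2 * m * γ * ⟪u' t, u'' t⟫ := by
      field_simp
      ring
    have e2 : γ * (-(m ^ 2 / γ) * ‖u'' t‖ ^ 2
        - (1 / γ) * (γ ^ 2 - m * (Li : ℝ)) * ‖u' t‖ ^ 2)
        = -(m ^ 2) * ‖u'' t‖ ^ 2 - (γ ^ 2 - m * (Li : ℝ)) * ‖u' t‖ ^ 2 := by
      field_simp
    rw [e1, e2]
    nlinarith [hk, hmul]
  -- covering Ioo t₀ T by countably many compact subintervals
  have hTt : 0 < T - t₀ := sub_pos.mpr hT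
  set aseq : ℕ → ℝ := fun n => t₀ + (T - t₀) / (n + 2) with haseq
  set bseq : ℕ → ℝ := fun n => T - (T - t₀) / (n + 2) with hbseq
  have hden : ∀ n : ℕ, (0 : ℝ) < (n : ℝ) + 2 := fun n => by positivity
  have haT : ∀ n, t₀ < aseq n := fun n => by
    rw [haseq]; simp only; nlinarith [hden n, div_pos hTt (hden n)]
  have hbT : ∀ n, bseq n < T := fun n => by
    rw [hbseq]; simp only; nlinarith [div_pos hTt (hden n)]
  have hmain : ∀ n : ℕ, ∀ᵐ t ∂(volume : Measure ℝ), t ∈ Set.Ioo (aseq n) (bseq n) →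
      DifferentiableAt ℝ E t ∧
      deriv E t ≤ -(m ^ 2 / γ) * ‖u'' t‖ ^ 2
        - (1 / γ) * (γ ^ 2 - m * (Li : ℝ)) * ‖u' t‖ ^ 2 :=
    fun n => main (aseq n) (bseq n) (haT n) (hbT n)
  filter_upwards [MeasureTheory.ae_all_iff.mpr hmain] with t hall ht
  -- find n such that t ∈ Ioo (aseq n) (bseq n)
  set ε : ℝ := min (t - t₀) (T - t) with hεdef
  have hε : 0 < ε := lt_min (sub_pos.mpr ht.1) (sub_pos.mpr ht.2)
  obtain ⟨n, hn⟩ := exists_nat_gt ((T - t₀) / ε)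
  have hn' : (T - t₀) / ((n : ℝ) + 2) < ε := by
    rw [div_lt_iff₀ (hden n)]
    have h1 : (T - t₀) / ε < (n : ℝ) + 2 := by linarith
    rw [div_lt_iff₀ hε] at h1
    linarith [mul_le_mul_of_nonneg_left (le_refl ε) hε.le]
  have h1 : aseq n < t := by
    have : (T - t₀) / ((n : ℝ) + 2) < t - t₀ := lt_of_lt_of_le hn' (min_le_left _ _)
    rw [haseq]; simp only; linarith
  have h2 : t < bseq n := by
    have : (T - t₀) / ((n : ℝ) + 2) < T - t := lt_of_lt_of_le hn' (min_le_right _ _)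
    rw [hbseq]; simp only; linarith
  exact hall n ⟨h1, h2⟩
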